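/- For all integers n ≥ 0, w_n = ⌈(3√5/25 + ((2+√5)/5)·n)·α^n⌉, where α = (1+√5)/2 and ⌈·⌉ denotes the ceiling function on the reals. -/
import Mathlib

private lemma two_step_ind (P : ℕ → Prop) (h0 : P 0) (h1 : P 1)
    (hs : ∀ n, P n → P (n + 1) → P (n + 2)) : ∀ n, P n := by
  intro n
  induction n using Nat.strong_induction_on with
  | _ n ih =>
    match n with
    | 0 => exact h0
    | 1 => exact h1
    | (m + 2) => exact hs m (ih m (by omega)) (ih (m + 1) (by omega))

set_option maxHeartbeats 1000000 in
theorem stmt_17 (r R1 R2 w : ℕ → ℕ)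
    (hr : ∀ n : ℕ, 2 ≤ n → r n = r (n - 1) + r (n - 2))
    (hR1 : ∀ n : ℕ, 2 ≤ n → R1 n = R1 (n - 2) + r n)
    (hR2 : ∀ n : ℕ, 2 ≤ n → R2 n = R2 (n - 1) + R2 (n - 2) + R1 (n - 2) + r n)
    (hr0 : r 0 = 1) (hr1 : r 1 = 1)
    (hR10 : R1 0 = 1) (hR11 : R1 1 = 1)
    (hR20 : R2 0 = 1) (hR21 : R2 1 = 2)
    (hw : ∀ n : ℕ, w n = R2 n) :
    ∀ n : ℕ, (w n : ℤ)
      = ⌈(3 * Real.sqrt 5 / 25 + (2 + Real.sqrt 5) / 5 * n)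
          * ((1 + Real.sqrt 5) / 2) ^ n⌉ := by
  set s : ℝ := Real.sqrt 5 with hsdef
  have hs5 : s ^ 2 = 5 := Real.sq_sqrt (by norm_num)
  have hs0 : (0:ℝ) < s := Real.sqrt_pos.mpr (by norm_num)
  have hs2 : (2:ℝ) < s := by nlinarith
  have hs3 : s < 3 := by nlinarith
  have hr' : ∀ n : ℕ, r (n + 2) = r (n + 1) + r n := by
    intro n; simpa using hr (n + 2) (by omega)
  have hR1' : ∀ n : ℕ, R1 (n + 2) = R1 n + r (n + 2) := by
    intro n; simpa using hR1 (n + 2) (by omega)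
  have hR2' : ∀ n : ℕ, R2 (n + 2) = R2 (n + 1) + R2 n + R1 n + r (n + 2) := by
    intro n; simpa using hR2 (n + 2) (by omega)
  have Pr : ∀ n : ℕ, (r n : ℝ) * s = ((1+s)/2)^(n+1) - ((1-s)/2)^(n+1) := by
    apply two_step_ind
    · rw [hr0]; push_cast; ring
    · rw [hr1]; push_cast; ring
    · intro n ih1 ih2
      rw [hr' n]; push_cast
      linear_combination ih1 + ih2 +
        ((1/8:ℝ)*((1-s)/2)^n - (1/8:ℝ)*((1+s)/2)^n
          - (1/8:ℝ)*s*((1-s)/2)^n - (1/8:ℝ)*s*((1+s)/2)^n) * hs5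
  have PR1 : ∀ n : ℕ, (R1 n : ℝ) * s
      = ((1+s)/2)^(n+2) - ((1-s)/2)^(n+2) - s * (1 - (-1:ℝ)^n) / 2 := by
    apply two_step_ind
    · rw [hR10]; push_cast; ring
    · rw [hR11]; push_cast
      linear_combination ((-1/4:ℝ)*s) * hs5
    · intro n ih1 _
      rw [hR1' n]; push_cast
      linear_combination ih1 + (Pr (n+2)) +
        ((1/16:ℝ)*((1-s)/2)^n - (1/16:ℝ)*((1+s)/2)^n
          - (1/8:ℝ)*s*((1-s)/2)^n - (1/8:ℝ)*s*((1+s)/2)^n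
          + (1/16:ℝ)*s^2*((1-s)/2)^n - (1/16:ℝ)*s^2*((1+s)/2)^n) * hs5
  have PR2 : ∀ n : ℕ, (R2 n : ℝ) * s
      = s * (3*s/25 + (2+s)/5*n) * ((1+s)/2)^n
        + s * ((2-s)/5*n - 3*s/25) * ((1-s)/2)^n
        + s * (1 + (-1:ℝ)^n) / 2 := by
    apply two_step_ind
    · rw [hR20]; push_cast; ring
    · rw [hR21]; push_cast
      linear_combination ((-8/25:ℝ)*s) * hs5
    · intro n ih1 ih2
      rw [hR2' n]; push_cast at ih1 ih2 ⊢
      linear_combination ih1 + ih2 + (PR1 n) + (Pr (n+2)) +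
        ((3/40:ℝ)*((1-s)/2)^n - (3/40:ℝ)*((1+s)/2)^n
          - (7/40:ℝ)*s*((1-s)/2)^n - (7/40:ℝ)*s*((1+s)/2)^n
          - (1/10:ℝ)*s*(n:ℝ)*((1-s)/2)^n - (1/10:ℝ)*s*(n:ℝ)*((1+s)/2)^n
          + (13/100:ℝ)*s^2*((1-s)/2)^n - (13/100:ℝ)*s^2*((1+s)/2)^n
          + (1/20:ℝ)*s^2*(n:ℝ)*((1-s)/2)^n - (1/20:ℝ)*s^2*(n:ℝ)*((1+s)/2)^n) * hs5
  have hγpos : (0:ℝ) < (s-1)/2 := by linarith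
  have hγlt : (s-1)/2 < 1 := by linarith
  have key : ∀ m : ℕ, (3*s/25 + (s-2)/5*m) * ((s-1)/2)^m ≤ 3*s/25 := by
    intro m
    induction m with
    | zero => simp
    | succ k ih =>
      have hpk : (0:ℝ) < ((s-1)/2)^k := pow_pos hγpos k
      have hle1 : ((s-1)/2)^k ≤ 1 := pow_le_one₀ (by linarith) (by linarith)
      have h2 : ((s-1)/2) * ((3*s/25 + (s-2)/5*k) * ((s-1)/2)^k)
          ≤ ((s-1)/2) * (3*s/25) := by
        apply mul_le_mul_of_nonneg_left ih (by linarith)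
      have h3 : (s-2)/5 * (((s-1)/2)^k * ((s-1)/2)) ≤ (s-2)/5 * ((s-1)/2) := by
        apply mul_le_mul_of_nonneg_left _ (by linarith)
        nlinarith
      push_cast
      have hgoal : (3*s/25 + (s-2)/5*((k:ℝ)+1)) * ((s-1)/2)^(k+1)
          = ((s-1)/2) * ((3*s/25 + (s-2)/5*k) * ((s-1)/2)^k)
            + (s-2)/5 * (((s-1)/2)^k * ((s-1)/2)) := by ring
      rw [hgoal]
      nlinarith [h2, h3, hs5, hs2]
  intro n
  have hβγ : ((1-s)/2)^n = (-1:ℝ)^n * ((s-1)/2)^n := by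
    have h : (1-s)/2 = (-1) * ((s-1)/2) := by ring
    rw [h, mul_pow]
  have hA : (3*s/25 + (2+s)/5*n) * ((1+s)/2)^n
      = (R2 n : ℝ) - ((2-s)/5*n - 3*s/25) * ((1-s)/2)^n - (1 + (-1:ℝ)^n) / 2 := by
    apply mul_left_cancel₀ (ne_of_gt hs0)
    linear_combination (-1 : ℝ) * PR2 n
  have hXpos : (0:ℝ) < ((s-1)/2)^n := pow_pos hγpos n
  have hDpos : (0:ℝ) < 3*s/25 + (s-2)/5*n := by
    have : (0:ℝ) ≤ (s-2)/5 * n := mul_nonneg (by linarith) (Nat.cast_nonneg n)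
    linarith
  have hprod : (0:ℝ) < (3*s/25 + (s-2)/5*n) * ((s-1)/2)^n := mul_pos hDpos hXpos
  have hkn := key n
  rw [hw n]
  symm
  rw [Int.ceil_eq_iff]
  rw [hA, hβγ]
  push_cast
  rcases Nat.even_or_odd n with he | ho
  · rw [he.neg_one_pow]
    constructor
    · nlinarith [hprod]
    · nlinarith [hkn, hs3]
  · rw [ho.neg_one_pow]
    constructor
    · nlinarith [hkn, hs3]
    · nlinarith [hprod]
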